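/- Every finite-dimensional indecomposable H_n(q)-module is isomorphic to M(l,i) for a unique pair (l,i) with 1 ≤ l ≤ n and 0 ≤ i ≤ n−1; hence up to isomorphism there are exactly n² finite-dimensional indecomposable H_n(q)-modules. -/

import Mathlib

open scoped TensorProduct

/-- The defining relations of the Taft algebra: `g^n = 1`, `h^n = 0`, `hg = q·gh`,
where `g` (resp. `h`) is the free generator indexed by `true` (resp. `false`). -/
inductive TaftRel (k : Type) [Field k] (q : k) (n : ℕ) :
    FreeAlgebra k Bool → FreeAlgebra k Bool → Prop
  | g_pow : TaftRel k q n (FreeAlgebra.ι k true ^ n) 1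
  | h_pow : TaftRel k q n (FreeAlgebra.ι k false ^ n) 0
  | h_g : TaftRel k q n (FreeAlgebra.ι k false * FreeAlgebra.ι k true)
      (q • (FreeAlgebra.ι k true * FreeAlgebra.ι k false))

/-- The Taft algebra `H_n(q)`: the `k`-algebra generated by `g, h` subject to
`g^n = 1`, `h^n = 0`, `hg = q·gh`. -/
abbrev TaftAlgebra (k : Type) [Field k] (q : k) (n : ℕ) : Type :=
  RingQuot (TaftRel k q n)

/-- The generator `g` of the Taft algebra. -/
noncomputable def taftG (k : Type) [Field k] (q : k) (n : ℕ) : TaftAlgebra k q n :=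
  RingQuot.mkAlgHom k (TaftRel k q n) (FreeAlgebra.ι k true)

/-- The generator `h` of the Taft algebra. -/
noncomputable def taftH (k : Type) [Field k] (q : k) (n : ℕ) : TaftAlgebra k q n :=
  RingQuot.mkAlgHom k (TaftRel k q n) (FreeAlgebra.ι k false)


/-- `V` is (a copy of) the standard `H_n(q)`-module `M(l,i)`:
it has a `k`-basis `v_0, …, v_{l-1}` with `g • v_j = q^{i-j} • v_j`,
`h • v_j = v_{j+1}` (and `h • v_{l-1} = 0`).  (This is the basis `v_1, …, v_l`
of the paper re-indexed from `0`.) -/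
def StdMSpec (k : Type) [Field k] (q : k) (n : ℕ) (l : ℕ) (i : ℤ)
    (V : Type) [AddCommGroup V] [Module k V] [Module (TaftAlgebra k q n) V] : Prop :=
  ∃ v : Module.Basis (Fin l) k V,
    (∀ j : Fin l, taftG k q n • v j = q ^ (i - ((j : ℕ) : ℤ)) • v j) ∧
    (∀ j : Fin l, taftH k q n • v j =
      if h : (j : ℕ) + 1 < l then v ⟨(j : ℕ) + 1, h⟩ else 0)

section AbstractTaft

open Module Finset

section Abstract

variable {k : Type} [Field k] {q : k} {n : ℕ}
variable {V : Type} [AddCommGroup V] [Module k V]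

/-- grading projection associated to eigenvalue `c` -/
noncomputable def projP (n : ℕ) (G : Module.End k V) (c : k) : Module.End k V :=
  (n : k)⁻¹ • ∑ j ∈ Finset.range n, c⁻¹ ^ j • G ^ j

theorem sum_projP (hn : 2 ≤ n) (hq : IsPrimitiveRoot q n) (G : Module.End k V)
    (hG : G ^ n = 1) : ∑ d ∈ Finset.range n, projP n G (q ^ d) = 1 := by
  have hnk : ((n : ℕ) : k) ≠ 0 := by
    haveI : NeZero n := ⟨by omega⟩
    exact (hq.neZero').out
  have hq0 : q ≠ 0 := hq.ne_zero (by omega)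
  simp only [projP, ← Finset.smul_sum]
  rw [Finset.sum_comm]
  have hterm : ∀ j ∈ Finset.range n,
      (∑ d ∈ Finset.range n, ((q ^ d)⁻¹) ^ j • G ^ j) =
      (if j = 0 then (n : k) else 0) • G ^ j := by
    intro j hj
    rw [Finset.mem_range] at hj
    have : ∀ d, ((q ^ d)⁻¹) ^ j • (G ^ j) = ((q⁻¹ ^ j) ^ d) • G ^ j := by
      intro d
      congr 1
      rw [← inv_pow, ← pow_mul, ← pow_mul, mul_comm]
    simp only [this, ← Finset.sum_smul]
    congr 1
    by_cases hj0 : j = 0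
    · subst hj0; simp
    · rw [if_neg hj0]
      have hx1 : q⁻¹ ^ j ≠ 1 := by
        simp only [ne_eq, inv_pow, inv_eq_one]
        exact hq.pow_ne_one_of_pos_of_lt (by omega) hj
      rw [geom_sum_eq hx1]
      have hxn : (q⁻¹ ^ j) ^ n = 1 := by
        rw [← pow_mul, mul_comm, pow_mul, inv_pow, hq.pow_eq_one, inv_one, one_pow]
      rw [hxn, sub_self, zero_div]
  rw [Finset.sum_congr rfl hterm]
  rw [Finset.sum_eq_single 0 (fun b _ hb => by rw [if_neg hb, zero_smul])
    (fun h => absurd (Finset.mem_range.mpr (by omega)) h)]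
  rw [if_pos rfl, pow_zero, smul_smul, inv_mul_cancel₀ hnk, one_smul]


theorem projP_mul_G (G : Module.End k V) (hG : G ^ n = 1)
    {c : k} (hc0 : c ≠ 0) (hcn : c ^ n = 1) :
    projP n G c * G = c • projP n G c := by
  have key : ∑ j ∈ Finset.range n, c⁻¹ ^ (j + 1) • G ^ (j + 1) =
      ∑ j ∈ Finset.range n, c⁻¹ ^ j • G ^ j := by
    have h1 := Finset.sum_range_succ' (fun j => c⁻¹ ^ j • G ^ j) n
    have h2 := Finset.sum_range_succ (fun j => c⁻¹ ^ j • G ^ j) n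
    have hfn : c⁻¹ ^ n • G ^ n = c⁻¹ ^ 0 • G ^ 0 := by
      rw [hG, inv_pow, hcn, inv_one, pow_zero, pow_zero]
    have h3 := h1.symm.trans h2
    rw [hfn] at h3
    exact add_right_cancel h3
  have hsc : ∀ j : ℕ, c * c⁻¹ ^ (j + 1) = c⁻¹ ^ j := by
    intro j
    rw [pow_succ, mul_comm c, mul_assoc, inv_mul_cancel₀ hc0, mul_one]
  calc projP n G c * G
      = (n : k)⁻¹ • ∑ j ∈ Finset.range n, c⁻¹ ^ j • (G ^ j * G) := by
        rw [projP, smul_mul_assoc, Finset.sum_mul]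
        simp only [smul_mul_assoc]
    _ = (n : k)⁻¹ • ∑ j ∈ Finset.range n, c • (c⁻¹ ^ (j + 1) • G ^ (j + 1)) := by
        congr 1
        refine Finset.sum_congr rfl fun j _ => ?_
        rw [smul_smul, hsc, pow_succ]
    _ = c • ((n : k)⁻¹ • ∑ j ∈ Finset.range n, c⁻¹ ^ (j + 1) • G ^ (j + 1)) := by
        rw [← Finset.smul_sum, smul_comm]
    _ = c • projP n G c := by rw [projP, key]

theorem G_mul_projP (G : Module.End k V) (hG : G ^ n = 1)
    {c : k} (hc0 : c ≠ 0) (hcn : c ^ n = 1) :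
    G * projP n G c = c • projP n G c := by
  have hcomm : G * projP n G c = projP n G c * G := by
    rw [projP, mul_smul_comm, smul_mul_assoc, Finset.mul_sum, Finset.sum_mul]
    simp only [mul_smul_comm, smul_mul_assoc, ← pow_succ, ← pow_succ']
  rw [hcomm, projP_mul_G G hG hc0 hcn]

theorem projP_apply_eigen (hnk : ((n : ℕ) : k) ≠ 0) (G : Module.End k V) {c : k} (hc0 : c ≠ 0)
    {w : V} (hw : G w = c • w) : projP n G c w = w := by
  have hpow : ∀ j : ℕ, (G ^ j) w = c ^ j • w := by
    intro j
    induction j with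
    | zero => simp
    | succ j ih =>
        rw [pow_succ', Module.End.mul_apply, ih, map_smul, hw, smul_smul, ← pow_succ]
  rw [projP, LinearMap.smul_apply, LinearMap.sum_apply]
  simp only [LinearMap.smul_apply, hpow, smul_smul, ← mul_pow, inv_mul_cancel₀ hc0, one_pow,
    one_smul]
  rw [Finset.sum_const, Finset.card_range, ← Nat.cast_smul_eq_nsmul k, smul_smul,
    inv_mul_cancel₀ hnk, one_smul]

theorem key_existence (hn : 2 ≤ n) (hq : IsPrimitiveRoot q n)
    [FiniteDimensional k V] [Nontrivial V]
    (G H : Module.End k V) (hG : G ^ n = 1) (hH : H ^ n = 0)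
    (hHG : H * G = q • (G * H))
    (hind : ∀ U W : Submodule k V, (∀ x ∈ U, G x ∈ U) → (∀ x ∈ U, H x ∈ U) →
      (∀ x ∈ W, G x ∈ W) → (∀ x ∈ W, H x ∈ W) → (∀ x, x ∈ U → x ∈ W → x = 0) →
      U ⊔ W = ⊤ → U = ⊥ ∨ W = ⊥) :
    ∃ (m d : ℕ) (b : Basis (Fin m) k V), 1 ≤ m ∧ m ≤ n ∧ d < n ∧
      (∀ j : Fin m, G (b j) = q ^ ((d : ℤ) - ((j : ℕ) : ℤ)) • b j) ∧
      (∀ j : Fin m, H (b j) = if h : (j : ℕ) + 1 < m then b ⟨(j : ℕ) + 1, h⟩ else 0) := by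
  classical
  have hq0 : q ≠ 0 := hq.ne_zero (by omega)
  have hnk : ((n : ℕ) : k) ≠ 0 := by
    haveI : NeZero n := ⟨by omega⟩
    exact hq.neZero'.out
  have hqj0 : ∀ j : ℕ, q ^ j ≠ 0 := fun j => pow_ne_zero j hq0
  have hHjG : ∀ j : ℕ, H ^ j * G = q ^ j • (G * H ^ j) := by
    intro j
    induction j with
    | zero => simp
    | succ j ih =>
        calc H ^ (j+1) * G = H ^ j * (H * G) := by rw [pow_succ, mul_assoc]
          _ = q • (H ^ j * G * H) := by rw [hHG, mul_smul_comm, mul_assoc]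
          _ = q • ((q ^ j • (G * H ^ j)) * H) := by rw [ih]
          _ = (q * q ^ j) • (G * (H ^ j * H)) := by
              rw [smul_mul_assoc, smul_smul, mul_assoc]
          _ = q ^ (j+1) • (G * H ^ (j+1)) := by rw [← pow_succ', ← pow_succ]
  have hGHj : ∀ j : ℕ, G * H ^ j = (q ^ j)⁻¹ • (H ^ j * G) := by
    intro j
    rw [hHjG j, smul_smul, inv_mul_cancel₀ (hqj0 j), one_smul]
  have hex : ∃ m, H ^ m = 0 := ⟨n, hH⟩
  set m := Nat.find hex with hmdef
  have hm0 : H ^ m = 0 := Nat.find_spec hex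
  have hmn : m ≤ n := Nat.find_min' hex hH
  have hm1 : 1 ≤ m := by
    by_contra hc
    obtain ⟨x, hx⟩ := exists_ne (0 : V)
    have hmz : m = 0 := by omega
    rw [hmz, pow_zero] at hm0
    exact hx (by simpa using LinearMap.congr_fun hm0 x)
  have hHs : ∀ s : ℕ, m ≤ s → (H ^ s) = 0 := by
    intro s hs
    have : s = (s - m) + m := by omega
    rw [this, pow_add, hm0, mul_zero]
  have hHm1 : H ^ (m - 1) ≠ 0 := Nat.find_min hex (by omega)
  obtain ⟨w, hw⟩ : ∃ w, (H ^ (m - 1)) w ≠ 0 := by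
    by_contra hc
    push_neg at hc
    exact hHm1 (LinearMap.ext fun x => by simpa using hc x)
  have hsum2 : ∑ e ∈ Finset.range n, (H ^ (m-1)) (projP n G (q ^ e) w) = (H ^ (m-1)) w := by
    rw [← map_sum]
    congr 1
    calc ∑ e ∈ Finset.range n, projP n G (q ^ e) w
        = (∑ e ∈ Finset.range n, projP n G (q ^ e)) w := (LinearMap.sum_apply _ _ _).symm
      _ = w := by rw [sum_projP hn hq G hG]; rfl
  obtain ⟨d, hdmem, hvne⟩ := Finset.exists_ne_zero_of_sum_ne_zero (by rw [hsum2]; exact hw)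
  rw [Finset.mem_range] at hdmem
  set c : k := q ^ d with hcdef
  set v : V := projP n G c w with hvdef
  have hc0 : c ≠ 0 := hqj0 d
  have hcn : c ^ n = 1 := by rw [hcdef, ← pow_mul, mul_comm, pow_mul, hq.pow_eq_one, one_pow]
  have hGv : G v = c • v := by
    have h1 := LinearMap.congr_fun (G_mul_projP G hG hc0 hcn) w
    simpa [Module.End.mul_apply] using h1
  have hGb : ∀ t : ℕ, G ((H ^ t) v) = ((q ^ t)⁻¹ * c) • (H ^ t) v := by
    intro t
    have h1 := LinearMap.congr_fun (hGHj t) v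
    rw [Module.End.mul_apply] at h1
    calc G ((H ^ t) v) = ((q ^ t)⁻¹ • (H ^ t * G)) v := h1
      _ = (q ^ t)⁻¹ • (H ^ t) (G v) := by rw [LinearMap.smul_apply, Module.End.mul_apply]
      _ = ((q ^ t)⁻¹ * c) • (H ^ t) v := by rw [hGv, map_smul, smul_smul]
  set u : V := (H ^ (m - 1)) v with hudef
  set c' : k := (q ^ (m - 1))⁻¹ * c with hc'def
  have hGu : G u = c' • u := hGb (m - 1)
  have hc'0 : c' ≠ 0 := mul_ne_zero (inv_ne_zero (hqj0 _)) hc0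
  have hc'n : c' ^ n = 1 := by
    rw [hc'def, mul_pow, inv_pow, ← pow_mul, mul_comm (m-1), pow_mul, hq.pow_eq_one, one_pow,
      inv_one, one_mul, hcn]
  obtain ⟨ψ₀, hψ₀⟩ : ∃ φ : Module.Dual k V, φ u ≠ 0 := by
    by_contra hc
    push_neg at hc
    exact hvne ((Module.forall_dual_apply_eq_zero_iff k u).mp hc)
  set φ : V →ₗ[k] k := (((ψ₀ u)⁻¹ • ψ₀) : V →ₗ[k] k) ∘ₗ (projP n G c' : V →ₗ[k] V) with hφdef
  have hφu : φ u = 1 := by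
    rw [hφdef]
    simp only [LinearMap.coe_comp, Function.comp_apply]
    rw [projP_apply_eigen hnk G hc'0 hGu]
    simp [inv_mul_cancel₀ hψ₀]
  have hφG : ∀ x : V, φ (G x) = c' * φ x := by
    intro x
    have h1 : projP n G c' (G x) = c' • projP n G c' x := by
      have h2 := LinearMap.congr_fun (projP_mul_G G hG hc'0 hc'n) x
      simpa [Module.End.mul_apply] using h2
    rw [hφdef]
    simp only [LinearMap.coe_comp, Function.comp_apply, h1, map_smul, LinearMap.smul_apply,
      smul_eq_mul]
    try ring
  have hφHv : φ ((H ^ (m-1)) v) = 1 := hφu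
  have keyA : ∀ cf : Fin m → k,
      (∀ j, j < m → φ ((H ^ j) (∑ t : Fin m, cf t • (H ^ (t : ℕ)) v)) = 0) →
      ∀ t : Fin m, cf t = 0 := by
    intro cf hker
    have main : ∀ N : ℕ, ∀ t : Fin m, (t : ℕ) = N → cf t = 0 := by
      intro N
      induction N using Nat.strong_induction_on with
      | _ N ih =>
        intro t ht
        have htm : N < m := ht ▸ t.isLt
        have h0 := hker (m - 1 - N) (by omega)
        have hexp : φ ((H ^ (m-1-N)) (∑ t' : Fin m, cf t' • (H ^ (t' : ℕ)) v)) =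
            ∑ t' : Fin m, cf t' * φ ((H ^ ((m-1-N) + (t' : ℕ))) v) := by
          rw [map_sum, map_sum]
          refine Finset.sum_congr rfl fun t' _ => ?_
          rw [map_smul, map_smul, smul_eq_mul]
          congr 2
          rw [pow_add, Module.End.mul_apply]
        rw [hexp] at h0
        have hsingle : ∑ t' : Fin m, cf t' * φ ((H ^ ((m-1-N) + (t' : ℕ))) v) = cf t := by
          rw [Finset.sum_eq_single t]
          · have harith : m - 1 - N + (t : ℕ) = m - 1 := by omega
            rw [harith, hφHv, mul_one]
          · intro t' _ hne
            have hvne' : (t' : ℕ) ≠ N := fun h => hne (Fin.ext (by omega))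
            rcases Nat.lt_or_ge (t' : ℕ) N with hlt | hge
            · rw [ih (t' : ℕ) hlt t' rfl, zero_mul]
            · have hexpz : H ^ (m - 1 - N + (t' : ℕ)) = 0 := hHs _ (by omega)
              rw [hexpz]
              simp
          · intro hnotmem
            exact absurd (Finset.mem_univ t) hnotmem
        rw [hsingle] at h0
        exact h0
    exact fun t => main (t : ℕ) t rfl
  have hli : LinearIndependent k (fun t : Fin m => (H ^ (t : ℕ)) v) := by
    rw [Fintype.linearIndependent_iff]
    intro cf hcf t
    refine keyA cf (fun j hj => ?_) t
    rw [hcf]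
    simp
  set U₀ : Submodule k V := Submodule.span k (Set.range (fun t : Fin m => (H ^ (t : ℕ)) v))
    with hU₀def
  set Φ : V →ₗ[k] (Fin m → k) := LinearMap.pi (fun j : Fin m => φ ∘ₗ (H ^ (j : ℕ))) with hΦdef
  set W₀ : Submodule k V := LinearMap.ker Φ with hW₀def
  have hmemW : ∀ x : V, x ∈ W₀ ↔ ∀ j : Fin m, φ ((H ^ (j : ℕ)) x) = 0 := by
    intro x
    rw [hW₀def, LinearMap.mem_ker, funext_iff]
    apply forall_congr'
    intro j
    simp [hΦdef]
  have hdis : ∀ x, x ∈ U₀ → x ∈ W₀ → x = 0 := by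
    intro x hxU hxW
    obtain ⟨cf, hcf⟩ := (Submodule.mem_span_range_iff_exists_fun k).mp hxU
    have hz : ∀ t, cf t = 0 := by
      refine keyA cf (fun j hj => ?_)
      rw [hcf]
      exact (hmemW x).mp hxW ⟨j, hj⟩
    rw [← hcf]
    simp [hz]
  have hrank : Module.finrank k V ≤ m + Module.finrank k W₀ := by
    have h1 := LinearMap.finrank_range_add_finrank_ker Φ
    rw [← hW₀def] at h1
    have h2 : Module.finrank k (LinearMap.range Φ) ≤ Module.finrank k (Fin m → k) :=
      (LinearMap.range Φ).finrank_le
    rw [Module.finrank_pi, Fintype.card_fin] at h2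
    omega
  have hU₀rank : Module.finrank k U₀ = m := by
    rw [hU₀def, finrank_span_eq_card hli, Fintype.card_fin]
  have hinf : U₀ ⊓ W₀ = ⊥ := by
    rw [eq_bot_iff]
    intro x hx
    rw [Submodule.mem_bot]
    exact hdis x hx.1 hx.2
  have hsup : U₀ ⊔ W₀ = ⊤ := by
    apply Submodule.eq_top_of_finrank_eq
    have h3 := Submodule.finrank_sup_add_finrank_inf_eq U₀ W₀
    rw [hinf, finrank_bot, add_zero, hU₀rank] at h3
    have h4 := Submodule.finrank_le (U₀ ⊔ W₀)
    have h5 := Submodule.finrank_le W₀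
    omega
  have hU₀G : ∀ x ∈ U₀, G x ∈ U₀ := by
    intro x hx
    have hmap : U₀.map G ≤ U₀ := by
      rw [hU₀def, Submodule.map_span, Submodule.span_le]
      rintro y ⟨x', ⟨t, rfl⟩, rfl⟩
      rw [SetLike.mem_coe, hGb (t : ℕ)]
      exact Submodule.smul_mem _ _ (Submodule.subset_span ⟨t, rfl⟩)
    exact hmap ⟨x, hx, rfl⟩
  have hU₀H : ∀ x ∈ U₀, H x ∈ U₀ := by
    intro x hx
    have hmap : U₀.map H ≤ U₀ := by
      rw [hU₀def, Submodule.map_span, Submodule.span_le]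
      rintro y ⟨x', ⟨t, rfl⟩, rfl⟩
      rw [SetLike.mem_coe]
      have hHb : H ((H ^ (t : ℕ)) v) = (H ^ ((t : ℕ) + 1)) v := by
        rw [pow_succ', Module.End.mul_apply]
      rw [hHb]
      by_cases hcase : (t : ℕ) + 1 < m
      · exact Submodule.subset_span ⟨⟨(t : ℕ) + 1, hcase⟩, rfl⟩
      · rw [hHs _ (by omega)]
        simp
    exact hmap ⟨x, hx, rfl⟩
  have hW₀G : ∀ x ∈ W₀, G x ∈ W₀ := by
    intro x hx
    rw [hmemW] at hx ⊢
    intro j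
    have h1 := LinearMap.congr_fun (hHjG (j : ℕ)) x
    rw [Module.End.mul_apply] at h1
    rw [h1, LinearMap.smul_apply, Module.End.mul_apply, map_smul, smul_eq_mul, hφG, hx j]
    ring
  have hW₀H : ∀ x ∈ W₀, H x ∈ W₀ := by
    intro x hx
    rw [hmemW] at hx ⊢
    intro j
    have h1 : (H ^ (j : ℕ)) (H x) = (H ^ ((j : ℕ) + 1)) x := by
      rw [pow_succ, Module.End.mul_apply]
    rw [h1]
    by_cases hcase : (j : ℕ) + 1 < m
    · exact hx ⟨(j : ℕ) + 1, hcase⟩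
    · rw [hHs _ (by omega)]
      simp
  have hv0 : v ≠ 0 := by
    intro h
    apply hvne
    rw [hudef, h, map_zero]
  have hvU : v ∈ U₀ := by
    have h1 : v = (H ^ ((⟨0, by omega⟩ : Fin m) : ℕ)) v := by simp
    rw [h1]
    exact Submodule.subset_span ⟨⟨0, by omega⟩, rfl⟩
  rcases hind U₀ W₀ hU₀G hU₀H hW₀G hW₀H hdis hsup with hUbot | hWbot
  · rw [hUbot, Submodule.mem_bot] at hvU
    exact absurd hvU hv0
  · have hU₀top : U₀ = ⊤ := by rw [← hsup, hWbot, sup_bot_eq]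
    have hsp : ⊤ ≤ Submodule.span k (Set.range (fun t : Fin m => (H ^ (t : ℕ)) v)) :=
      le_of_eq hU₀top.symm
    refine ⟨m, d, Basis.mk hli hsp, hm1, hmn, hdmem, ?_, ?_⟩
    · intro j
      rw [Basis.mk_apply, hGb (j : ℕ)]
      congr 1
      rw [hcdef, zpow_sub₀ hq0, zpow_natCast, zpow_natCast, div_eq_mul_inv, mul_comm]
    · intro j
      rw [Basis.mk_apply]
      have hstep : H ((H ^ (j : ℕ)) v) = (H ^ ((j : ℕ) + 1)) v := by
        rw [pow_succ', Module.End.mul_apply]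
      rw [hstep]
      by_cases hcase : (j : ℕ) + 1 < m
      · rw [dif_pos hcase, Basis.mk_apply]
      · rw [dif_neg hcase, hHs _ (by omega)]
        simp

theorem string_pow (H : Module.End k V) {l : ℕ} (b : Basis (Fin l) k V)
    (hHb : ∀ j : Fin l, H (b j) = if h : (j : ℕ) + 1 < l then b ⟨(j : ℕ) + 1, h⟩ else 0) :
    ∀ (t : ℕ) (j : Fin l), (H ^ t) (b j) =
      if h : (j : ℕ) + t < l then b ⟨(j : ℕ) + t, h⟩ else 0 := by
  intro t
  induction t with
  | zero =>
      intro j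
      rw [pow_zero, Module.End.one_apply, dif_pos (by omega : (j : ℕ) + 0 < l)]
      exact congrArg b (Fin.eq_of_val_eq (by simp))
  | succ t ih =>
      intro j
      have h1 : (H ^ (t + 1)) (b j) = H ((H ^ t) (b j)) := by
        rw [pow_succ', Module.End.mul_apply]
      rw [h1, ih j]
      by_cases hc : (j : ℕ) + t < l
      · rw [dif_pos hc, hHb]
        by_cases hc2 : (j : ℕ) + t + 1 < l
        · rw [dif_pos (show ((⟨(j:ℕ)+t, hc⟩ : Fin l) : ℕ) + 1 < l from hc2),
            dif_pos (show (j : ℕ) + (t + 1) < l by omega)]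
          exact congrArg b (Fin.eq_of_val_eq (by simp [Nat.add_assoc]))
        · rw [dif_neg (show ¬(((⟨(j:ℕ)+t, hc⟩ : Fin l) : ℕ) + 1 < l) from hc2),
            dif_neg (show ¬((j : ℕ) + (t + 1) < l) by omega)]
      · rw [dif_neg hc, map_zero, dif_neg (by omega)]

theorem key_unique {l l' i i' : ℕ} (hn : 2 ≤ n) (hq : IsPrimitiveRoot q n)
    (G H : Module.End k V)
    (hi : i < n) (hi' : i' < n) (hl : 1 ≤ l) (hl' : 1 ≤ l')
    (b : Basis (Fin l) k V) (b' : Basis (Fin l') k V)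
    (hGb : ∀ j : Fin l, G (b j) = q ^ ((i : ℤ) - ((j : ℕ) : ℤ)) • b j)
    (hHb : ∀ j : Fin l, H (b j) = if h : (j : ℕ) + 1 < l then b ⟨(j : ℕ) + 1, h⟩ else 0)
    (hGb' : ∀ j : Fin l', G (b' j) = q ^ ((i' : ℤ) - ((j : ℕ) : ℤ)) • b' j)
    (hHb' : ∀ j : Fin l', H (b' j) = if h : (j : ℕ) + 1 < l' then b' ⟨(j : ℕ) + 1, h⟩ else 0) :
    l = l' ∧ i = i' := by
  have hq0 : q ≠ 0 := hq.ne_zero (by omega)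
  have hll : l = l' := by
    have h1 := Module.finrank_eq_card_basis b
    have h2 := Module.finrank_eq_card_basis b'
    rw [Fintype.card_fin] at h1 h2
    omega
  subst hll
  refine ⟨rfl, ?_⟩
  have hlt : l - 1 < l := by omega
  have hlt0 : 0 < l := by omega
  have hb'0 : (H ^ (l - 1)) (b' ⟨0, hlt0⟩) = b' ⟨l - 1, hlt⟩ := by
    rw [string_pow H b' hHb' (l - 1) ⟨0, hlt0⟩,
      dif_pos (show ((⟨0, hlt0⟩ : Fin l) : ℕ) + (l - 1) < l by simp; omega)]
    exact congrArg b' (Fin.eq_of_val_eq (by simp))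
  have hrepr : (b' ⟨0, hlt0⟩ : V) = ∑ j : Fin l, b.repr (b' ⟨0, hlt0⟩) j • b j :=
    (b.sum_repr _).symm
  have hkey : (b' ⟨l - 1, hlt⟩ : V) = b.repr (b' ⟨0, hlt0⟩) ⟨0, hlt0⟩ • b ⟨l - 1, hlt⟩ := by
    rw [← hb'0]
    conv_lhs => rw [hrepr]
    rw [map_sum]
    have hterm : ∀ t : Fin l,
        (H ^ (l - 1)) (b.repr (b' ⟨0, hlt0⟩) t • b t) =
        b.repr (b' ⟨0, hlt0⟩) t • (H ^ (l - 1)) (b t) := fun t => map_smul _ _ _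
    simp_rw [hterm]
    rw [Finset.sum_eq_single (⟨0, hlt0⟩ : Fin l)]
    · rw [string_pow H b hHb,
        dif_pos (show ((⟨0, hlt0⟩ : Fin l) : ℕ) + (l - 1) < l by simp; omega)]
      congr 2
      exact Fin.eq_of_val_eq (by simp)
    · intro t _ hne
      have htne : (t : ℕ) ≠ 0 := fun h => hne (Fin.eq_of_val_eq (by simpa using h))
      rw [string_pow H b hHb, dif_neg (show ¬((t : ℕ) + (l - 1) < l) by omega)]
      simp
    · intro hnotmem
      exact absurd (Finset.mem_univ _) hnotmem
  have hb'ne : (b' ⟨l - 1, hlt⟩ : V) ≠ 0 := Basis.ne_zero b' ⟨l - 1, hlt⟩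
  have hG1 : G (b' ⟨l - 1, hlt⟩) =
      q ^ ((i' : ℤ) - (((⟨l - 1, hlt⟩ : Fin l) : ℕ) : ℤ)) • b' ⟨l - 1, hlt⟩ := hGb' _
  have hG2 : G (b' ⟨l - 1, hlt⟩) =
      q ^ ((i : ℤ) - (((⟨l - 1, hlt⟩ : Fin l) : ℕ) : ℤ)) • b' ⟨l - 1, hlt⟩ := by
    rw [hkey, map_smul, hGb ⟨l - 1, hlt⟩, smul_smul, smul_smul, mul_comm]
  have hGeq := hG1.symm.trans hG2
  have hzpow : q ^ ((i' : ℤ) - (((⟨l - 1, hlt⟩ : Fin l) : ℕ) : ℤ)) =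
      q ^ ((i : ℤ) - (((⟨l - 1, hlt⟩ : Fin l) : ℕ) : ℤ)) := by
    have hsub : (q ^ ((i' : ℤ) - (((⟨l - 1, hlt⟩ : Fin l) : ℕ) : ℤ)) -
        q ^ ((i : ℤ) - (((⟨l - 1, hlt⟩ : Fin l) : ℕ) : ℤ))) • (b' ⟨l - 1, hlt⟩ : V) = 0 := by
      rw [sub_smul, hGeq, sub_self]
    rcases smul_eq_zero.mp hsub with h | h
    · exact sub_eq_zero.mp h
    · exact absurd h hb'ne
  have hpq : q ^ (i' : ℤ) = q ^ (i : ℤ) := by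
    have h1 : q ^ ((i' : ℤ) - (((⟨l - 1, hlt⟩ : Fin l) : ℕ) : ℤ)) *
        q ^ ((((⟨l - 1, hlt⟩ : Fin l) : ℕ) : ℤ)) =
        q ^ ((i : ℤ) - (((⟨l - 1, hlt⟩ : Fin l) : ℕ) : ℤ)) *
        q ^ ((((⟨l - 1, hlt⟩ : Fin l) : ℕ) : ℤ)) := by rw [hzpow]
    rw [← zpow_add₀ hq0, ← zpow_add₀ hq0, sub_add_cancel, sub_add_cancel] at h1
    exact h1
  rw [zpow_natCast, zpow_natCast] at hpq
  exact (hq.pow_inj hi' hi hpq).symm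

end Abstract

section Glue

theorem taftG_pow (k : Type) [Field k] (q : k) (n : ℕ) : (taftG k q n) ^ n = 1 := by
  rw [taftG, ← map_pow, ← map_one (RingQuot.mkAlgHom k (TaftRel k q n))]
  exact RingQuot.mkAlgHom_rel k TaftRel.g_pow

theorem taftH_pow (k : Type) [Field k] (q : k) (n : ℕ) : (taftH k q n) ^ n = 0 := by
  rw [taftH, ← map_pow, ← map_zero (RingQuot.mkAlgHom k (TaftRel k q n))]
  exact RingQuot.mkAlgHom_rel k TaftRel.h_pow

theorem taftHG (k : Type) [Field k] (q : k) (n : ℕ) :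
    taftH k q n * taftG k q n = q • (taftG k q n * taftH k q n) := by
  rw [taftH, taftG, ← map_mul, ← map_mul, ← map_smul]
  exact RingQuot.mkAlgHom_rel k TaftRel.h_g

/-- A `k`-subspace stable under `g` and `h` is a Taft-submodule. -/
def taftSub {k : Type} [Field k] {q : k} {n : ℕ} {V : Type} [AddCommGroup V] [Module k V]
    [Module (TaftAlgebra k q n) V] [IsScalarTower k (TaftAlgebra k q n) V]
    (U : Submodule k V) (hg : ∀ x ∈ U, taftG k q n • x ∈ U)
    (hh : ∀ x ∈ U, taftH k q n • x ∈ U) : Submodule (TaftAlgebra k q n) V where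
  carrier := U
  add_mem' := fun ha hb => U.add_mem ha hb
  zero_mem' := U.zero_mem
  smul_mem' := by
    intro a x hx
    obtain ⟨y, rfl⟩ := RingQuot.mkAlgHom_surjective k (TaftRel k q n) a
    refine FreeAlgebra.induction k Bool
      (motive := fun y => ∀ x, x ∈ U → RingQuot.mkAlgHom k (TaftRel k q n) y • x ∈ U)
      ?_ ?_ ?_ ?_ y x hx
    · intro r x hx
      rw [AlgHom.commutes, algebraMap_smul]
      exact U.smul_mem r hx
    · intro b
      cases b
      · exact hh
      · exact hg
    · intro y z hy hz x hx
      rw [map_mul, mul_smul]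
      exact hy _ (hz x hx)
    · intro y z hy hz x hx
      rw [map_add, add_smul]
      exact U.add_mem (hy x hx) (hz x hx)

theorem mem_taftSub {k : Type} [Field k] {q : k} {n : ℕ} {V : Type} [AddCommGroup V] [Module k V]
    [Module (TaftAlgebra k q n) V] [IsScalarTower k (TaftAlgebra k q n) V]
    {U : Submodule k V} {hg} {hh} {x : V} : x ∈ taftSub (q := q) (n := n) U hg hh ↔ x ∈ U :=
  Iff.rfl

end Glue

/-- Every finite-dimensional indecomposable `H_n(q)`-module is
isomorphic to `M(l,i)` for a unique pair `(l,i)` with `1 ≤ l ≤ n` and `0 ≤ i ≤ n−1`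
(so up to isomorphism there are exactly `n²` finite-dimensional indecomposables). -/
theorem taft_indecomposable_classification (k : Type) [Field k] (n : ℕ) (hn : 2 ≤ n)
    (q : k) (hq : IsPrimitiveRoot q n)
    (V : Type) [AddCommGroup V] [Module k V] [Module (TaftAlgebra k q n) V]
    [IsScalarTower k (TaftAlgebra k q n) V] [Module.Finite k V]
    (hne : (⊥ : Submodule (TaftAlgebra k q n) V) ≠ ⊤)
    (hind : ∀ W U : Submodule (TaftAlgebra k q n) V, IsCompl W U → W = ⊥ ∨ U = ⊥) :
    -- existence
    (∃ l i : ℕ, 1 ≤ l ∧ l ≤ n ∧ i < n ∧ StdMSpec k q n l (i : ℤ) V) ∧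
    -- uniqueness
    (∀ l l' i i' : ℕ, 1 ≤ l → l ≤ n → i < n → 1 ≤ l' → l' ≤ n → i' < n →
      StdMSpec k q n l (i : ℤ) V → StdMSpec k q n l' (i' : ℤ) V → l = l' ∧ i = i') := by
  classical
  haveI hSMC : SMulCommClass (TaftAlgebra k q n) k V :=
    ⟨fun a c x => by
      rw [← algebraMap_smul (TaftAlgebra k q n) c x, ← mul_smul, ← Algebra.commutes, mul_smul,
        algebraMap_smul]⟩
  rcases subsingleton_or_nontrivial V with hsub | hnt
  · exact absurd (by ext x; simp [Subsingleton.elim x (0 : V)]) hne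
  set ρ : TaftAlgebra k q n →ₐ[k] Module.End k V := Algebra.lsmul k k V with hρdef
  have hρ : ∀ (a : TaftAlgebra k q n) (x : V), ρ a x = a • x := fun _ _ => rfl
  set G : Module.End k V := ρ (taftG k q n) with hGdef
  set H : Module.End k V := ρ (taftH k q n) with hHdef
  have hG : G ^ n = 1 := by rw [hGdef, ← map_pow, taftG_pow, map_one]
  have hH : H ^ n = 0 := by rw [hHdef, ← map_pow, taftH_pow, map_zero]
  have hHG : H * G = q • (G * H) := by
    rw [hGdef, hHdef, ← map_mul, ← map_mul, taftHG, map_smul]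
  have hind' : ∀ U W : Submodule k V, (∀ x ∈ U, G x ∈ U) → (∀ x ∈ U, H x ∈ U) →
      (∀ x ∈ W, G x ∈ W) → (∀ x ∈ W, H x ∈ W) → (∀ x, x ∈ U → x ∈ W → x = 0) →
      U ⊔ W = ⊤ → U = ⊥ ∨ W = ⊥ := by
    intro U W hUG hUH hWG hWH hdis hsup
    have hUG' : ∀ x ∈ U, taftG k q n • x ∈ U := fun x hx => hUG x hx
    have hUH' : ∀ x ∈ U, taftH k q n • x ∈ U := fun x hx => hUH x hx
    have hWG' : ∀ x ∈ W, taftG k q n • x ∈ W := fun x hx => hWG x hx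
    have hWH' : ∀ x ∈ W, taftH k q n • x ∈ W := fun x hx => hWH x hx
    have hcompl : IsCompl (taftSub (q := q) (n := n) W hWG' hWH')
        (taftSub (q := q) (n := n) U hUG' hUH') := by
      constructor
      · rw [disjoint_iff, eq_bot_iff]
        intro x hx
        rw [Submodule.mem_inf] at hx
        rw [Submodule.mem_bot]
        exact hdis x (mem_taftSub.mp hx.2) (mem_taftSub.mp hx.1)
      · rw [codisjoint_iff, eq_top_iff]
        intro x _
        have hx : x ∈ U ⊔ W := hsup ▸ Submodule.mem_top
        obtain ⟨xu, hu, xw, hw, rfl⟩ := Submodule.mem_sup.mp hx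
        exact Submodule.add_mem _ (Submodule.mem_sup_right (mem_taftSub.mpr hu))
          (Submodule.mem_sup_left (mem_taftSub.mpr hw))
    rcases hind _ _ hcompl with hW | hU
    · right
      rw [eq_bot_iff]
      intro x hx
      have hx' : x ∈ taftSub (q := q) (n := n) W hWG' hWH' := mem_taftSub.mpr hx
      rw [hW, Submodule.mem_bot] at hx'
      rw [Submodule.mem_bot, hx']
    · left
      rw [eq_bot_iff]
      intro x hx
      have hx' : x ∈ taftSub (q := q) (n := n) U hUG' hUH' := mem_taftSub.mpr hx
      rw [hU, Submodule.mem_bot] at hx'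
      rw [Submodule.mem_bot, hx']
  constructor
  · obtain ⟨m, d, b, hm1, hmn, hd, hGb, hHb⟩ := key_existence hn hq G H hG hH hHG hind'
    exact ⟨m, d, hm1, hmn, hd, b, fun j => hGb j, fun j => hHb j⟩
  · rintro l l' i i' hl1 _ hi hl'1 _ hi' ⟨b, hGb, hHb⟩ ⟨b', hGb', hHb'⟩
    exact key_unique hn hq G H hi hi' hl1 hl'1 b b'
      (fun j => hGb j) (fun j => hHb j) (fun j => hGb' j) (fun j => hHb' j)
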